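/- arXiv:1205.3102 — 2 statements merged into one kernel-verified Lean document; each statement's English description precedes it below -/
import Mathlib

section
/- Let n ≥ 2d, let K* := {m : H^S_{n,2d} → ℝ linear : m(g) ≥ 0 for every symmetric form g of degree 2d that is a sum of squares} be the dual cone of the symmetric sums of squares, and let ℓ ∈ K* be nonzero with kernel W_ℓ := {p ∈ H_{n,d} : ℓ(Sym_n(p^2)) = 0}. Then ℓ spans an extreme ray of K* (i.e. whenever ℓ = m_1 + m_2 with m_1, m_2 ∈ K*, each m_i is a nonnegative scalar multiple of ℓ) if and only if W_ℓ^{<2>} is a hyperplane in H^S_{n,2d}, i.e. a linear subspace of codimension one. -/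
open MvPolynomial

/-- The symmetrization `Sym_n(f) = (1/n!) Σ_{σ ∈ S_n} σ·f`. -/
noncomputable def symmetrize (n : ℕ) (f : MvPolynomial (Fin n) ℝ) :
    MvPolynomial (Fin n) ℝ :=
  C ((n.factorial : ℝ)⁻¹) * ∑ σ : Equiv.Perm (Fin n), rename (⇑σ) f

/-- Membership in `H^S_{n,2d}`: symmetric forms of degree `2d`. -/
def IsSymmetricForm (n k : ℕ) (g : MvPolynomial (Fin n) ℝ) : Prop :=
  g.IsSymmetric ∧ g.IsHomogeneous k

/-- Membership in the dual cone `(Σ^S_{n,2d})^*`, for a linear functional on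
`H^S_{n,2d}` represented by an arbitrary linear extension to the polynomial
ring: nonnegativity on all symmetric degree-`2d` sums of squares. -/
def MemDualSos (n k : ℕ) (m : MvPolynomial (Fin n) ℝ →ₗ[ℝ] ℝ) : Prop :=
  ∀ g : MvPolynomial (Fin n) ℝ, IsSymmetricForm n k g → IsSumSq g → 0 ≤ m g

/-- The set `W_ℓ^{<2>} = {Sym_n(Σ_i f_i g_i) : f_i ∈ W_ℓ, g_i ∈ H_{n,d}}`,
where `W_ℓ = {p ∈ H_{n,d} : ℓ(Sym_n(p²)) = 0}` is the kernel of the quadratic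
form `Q_ℓ`. -/
def Wsq (n d : ℕ) (ℓ : MvPolynomial (Fin n) ℝ →ₗ[ℝ] ℝ) :
    Set (MvPolynomial (Fin n) ℝ) :=
  {h | ∃ (m : ℕ) (F G : Fin m → MvPolynomial (Fin n) ℝ),
    (∀ i, (F i).IsHomogeneous d ∧ ℓ (symmetrize n (F i ^ 2)) = 0) ∧
    (∀ i, (G i).IsHomogeneous d) ∧
    h = symmetrize n (∑ i, F i * G i)}

noncomputable def symL (n : ℕ) : MvPolynomial (Fin n) ℝ →ₗ[ℝ] MvPolynomial (Fin n) ℝ :=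
  ((n.factorial : ℝ)⁻¹) • (∑ σ : Equiv.Perm (Fin n),
    (rename (R := ℝ) (⇑σ)).toLinearMap)

lemma symmetrize_eq (n : ℕ) (f : MvPolynomial (Fin n) ℝ) :
    symmetrize n f = symL n f := by
  simp [symmetrize, symL, LinearMap.sum_apply, smul_eq_C_mul]

lemma symmetrize_symm (n : ℕ) {g : MvPolynomial (Fin n) ℝ} (hg : g.IsSymmetric) :
    symmetrize n g = g := by
  have h : ∀ σ : Equiv.Perm (Fin n), rename (⇑σ) g = g := hg
  simp only [symmetrize, h, Finset.sum_const, Finset.card_univ]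
  rw [Fintype.card_perm]
  simp only [Fintype.card_fin, nsmul_eq_mul]
  rw [← mul_assoc, ← C_eq_coe_nat, ← C_mul,
    inv_mul_cancel₀ (by exact_mod_cast n.factorial_ne_zero), C_1, one_mul]

lemma isSymmetric_symmetrize (n : ℕ) (f : MvPolynomial (Fin n) ℝ) :
    (symmetrize n f).IsSymmetric := by
  intro e
  simp only [symmetrize, map_mul, rename_C, map_sum]
  congr 1
  rw [← Equiv.sum_comp (Equiv.mulLeft e) (fun σ : Equiv.Perm (Fin n) => rename (⇑σ) f)]
  refine Finset.sum_congr rfl fun σ _ => ?_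
  rw [rename_rename]
  rfl

lemma isHomogeneous_symmetrize (n k : ℕ) {f : MvPolynomial (Fin n) ℝ}
    (hf : f.IsHomogeneous k) : (symmetrize n f).IsHomogeneous k := by
  rw [symmetrize]
  have h0 : (0 : ℕ) + k = k := zero_add k
  rw [← h0]
  exact (isHomogeneous_C _ _).mul <| IsHomogeneous.sum _ _ _
    (fun σ _ => hf.rename_isHomogeneous)

lemma isSumSq_symmetrize_sq (n : ℕ) (p : MvPolynomial (Fin n) ℝ) :
    IsSumSq (symmetrize n (p ^ 2)) := by
  set a : ℝ := Real.sqrt ((n.factorial : ℝ)⁻¹) with ha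
  have haa : a * a = (n.factorial : ℝ)⁻¹ :=
    Real.mul_self_sqrt (by positivity)
  have : symmetrize n (p ^ 2)
      = ∑ σ : Equiv.Perm (Fin n), (C a * rename (⇑σ) p) * (C a * rename (⇑σ) p) := by
    rw [symmetrize, Finset.mul_sum]
    refine Finset.sum_congr rfl fun σ _ => ?_
    rw [map_pow, show (C a * rename (⇑σ) p) * (C a * rename (⇑σ) p)
      = C (a * a) * (rename (⇑σ) p)^2 by rw [C_mul]; ring, haa]
  rw [this]
  exact IsSumSq.sum_mul_self _ _

/-- The bilinear form `B_μ(p,q) = μ(Sym(pq))`. -/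
noncomputable def Bf (n : ℕ) (μ : MvPolynomial (Fin n) ℝ →ₗ[ℝ] ℝ) :
    MvPolynomial (Fin n) ℝ →ₗ[ℝ] MvPolynomial (Fin n) ℝ →ₗ[ℝ] ℝ :=
  LinearMap.mk₂ ℝ (fun p q => μ (symL n (p * q)))
    (fun p p' q => by rw [add_mul, map_add, map_add])
    (fun c p q => by rw [smul_mul_assoc, map_smul, map_smul])
    (fun p q q' => by rw [mul_add, map_add, map_add])
    (fun c p q => by rw [mul_smul_comm, map_smul, map_smul])

lemma Bf_apply (n : ℕ) (μ : MvPolynomial (Fin n) ℝ →ₗ[ℝ] ℝ)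
    (p q : MvPolynomial (Fin n) ℝ) :
    Bf n μ p q = μ (symmetrize n (p * q)) := by
  rw [symmetrize_eq]; rfl

lemma Bf_symm (n : ℕ) (μ : MvPolynomial (Fin n) ℝ →ₗ[ℝ] ℝ)
    (p q : MvPolynomial (Fin n) ℝ) : Bf n μ p q = Bf n μ q p := by
  rw [Bf_apply, Bf_apply, mul_comm]

lemma symmForm_symmetrize_sq (n d : ℕ) {p : MvPolynomial (Fin n) ℝ}
    (hp : p.IsHomogeneous d) :
    IsSymmetricForm n (2 * d) (symmetrize n (p ^ 2)) :=
  ⟨isSymmetric_symmetrize n _, isHomogeneous_symmetrize n _ (by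
    have := hp.pow 2; simpa [two_mul, mul_comm] using this)⟩

lemma Bf_nonneg {n k : ℕ} {μ : MvPolynomial (Fin n) ℝ →ₗ[ℝ] ℝ}
    (hμ : MemDualSos n (2 * k) μ) {p : MvPolynomial (Fin n) ℝ}
    (hp : p.IsHomogeneous k) : 0 ≤ Bf n μ p p := by
  rw [Bf_apply, ← sq]
  exact hμ _ (symmForm_symmetrize_sq n k hp) (isSumSq_symmetrize_sq n p)

lemma aux_cs {a b : ℝ} (h : ∀ t : ℝ, 0 ≤ 2 * t * a + t ^ 2 * b) : a = 0 := by
  have hb : 0 ≤ b := by have h1 := h 1; have h2 := h (-1); nlinarith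
  have hb1 : (0:ℝ) < b + 1 := by linarith
  have hne : (b+1) ≠ 0 := ne_of_gt hb1
  have key := h (-a / (b + 1))
  have e : 2 * (-a/(b+1)) * a + (-a/(b+1))^2 * b = -(a^2*(b+2))/(b+1)^2 := by
    field_simp; ring
  rw [e] at key
  have h2 : (0:ℝ) < (b+1)^2 := by positivity
  have key2 : 0 ≤ -(a^2*(b+2)) := by
    have := mul_nonneg key h2.le
    rwa [div_mul_cancel₀ _ (ne_of_gt h2)] at this
  nlinarith [sq_nonneg a]

/-- degenerate Cauchy–Schwarz: if `B_μ(p,p) = 0` then `B_μ(p,q) = 0`. -/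
lemma Bf_zero_of_ker {n k : ℕ} {μ : MvPolynomial (Fin n) ℝ →ₗ[ℝ] ℝ}
    (hμ : MemDualSos n (2 * k) μ) {p q : MvPolynomial (Fin n) ℝ}
    (hp : p.IsHomogeneous k) (hq : q.IsHomogeneous k)
    (hpp : Bf n μ p p = 0) : Bf n μ p q = 0 := by
  apply aux_cs (b := Bf n μ q q)
  intro t
  have hmem : (p + t • q).IsHomogeneous k := by
    rw [← mem_homogeneousSubmodule] at *
    exact Submodule.add_mem _ hp (Submodule.smul_mem _ t hq)
  have h0 := Bf_nonneg hμ hmem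
  have hexp : Bf n μ (p + t • q) (p + t • q)
      = Bf n μ p p + t * Bf n μ p q + (t * Bf n μ q p + t^2 * Bf n μ q q) := by
    simp [map_add, map_smul, LinearMap.add_apply, LinearMap.smul_apply, smul_eq_mul]
    ring
  rw [hexp, hpp, Bf_symm n μ q p] at h0
  linarith

lemma Wsq_isSymmetricForm {n d : ℕ} {ℓ : MvPolynomial (Fin n) ℝ →ₗ[ℝ] ℝ}
    {h : MvPolynomial (Fin n) ℝ} (hh : h ∈ Wsq n d ℓ) :
    IsSymmetricForm n (2 * d) h := by
  obtain ⟨m, F, G, hF, hG, rfl⟩ := hh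
  refine ⟨isSymmetric_symmetrize n _, isHomogeneous_symmetrize n _ ?_⟩
  refine IsHomogeneous.sum _ _ _ fun i _ => ?_
  have := (hF i).1.mul (hG i)
  simpa [two_mul] using this

lemma Wsq_apply_eq_zero {n d : ℕ} {ℓ : MvPolynomial (Fin n) ℝ →ₗ[ℝ] ℝ}
    (hmem : MemDualSos n (2 * d) ℓ)
    {h : MvPolynomial (Fin n) ℝ} (hh : h ∈ Wsq n d ℓ) : ℓ h = 0 := by
  obtain ⟨m, F, G, hF, hG, rfl⟩ := hh
  rw [symmetrize_eq, map_sum, map_sum]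
  refine Finset.sum_eq_zero fun i _ => ?_
  have hpp : Bf n ℓ (F i) (F i) = 0 := by
    rw [Bf_apply, ← sq]; exact (hF i).2
  have := Bf_zero_of_ker hmem (hF i).1 (hG i) hpp
  rw [Bf_apply, symmetrize_eq] at this
  exact this

lemma Wsq_zero_mem (n d : ℕ) (ℓ : MvPolynomial (Fin n) ℝ →ₗ[ℝ] ℝ) :
    (0 : MvPolynomial (Fin n) ℝ) ∈ Wsq n d ℓ := by
  refine ⟨0, Fin.elim0, Fin.elim0, fun i => i.elim0, fun i => i.elim0, ?_⟩
  simp [symmetrize]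

lemma Wsq_add_mem {n d : ℕ} {ℓ : MvPolynomial (Fin n) ℝ →ₗ[ℝ] ℝ}
    {h₁ h₂ : MvPolynomial (Fin n) ℝ} (m₁ : h₁ ∈ Wsq n d ℓ) (m₂ : h₂ ∈ Wsq n d ℓ) :
    h₁ + h₂ ∈ Wsq n d ℓ := by
  obtain ⟨k₁, F₁, G₁, hF₁, hG₁, rfl⟩ := m₁
  obtain ⟨k₂, F₂, G₂, hF₂, hG₂, rfl⟩ := m₂
  refine ⟨k₁ + k₂, Fin.append F₁ F₂, Fin.append G₁ G₂, ?_, ?_, ?_⟩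
  · intro i
    refine Fin.addCases (fun j => ?_) (fun j => ?_) i
    · rw [Fin.append_left]; exact hF₁ j
    · rw [Fin.append_right]; exact hF₂ j
  · intro i
    refine Fin.addCases (fun j => ?_) (fun j => ?_) i
    · rw [Fin.append_left]; exact hG₁ j
    · rw [Fin.append_right]; exact hG₂ j
  · rw [symmetrize_eq, symmetrize_eq, symmetrize_eq, ← map_add]
    congr 1
    rw [Fin.sum_univ_add]
    congr 1 <;> refine Finset.sum_congr rfl fun j _ => ?_ <;>
      simp [Fin.append_left, Fin.append_right]

lemma Wsq_smul_mem {n d : ℕ} {ℓ : MvPolynomial (Fin n) ℝ →ₗ[ℝ] ℝ} (c : ℝ)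
    {h : MvPolynomial (Fin n) ℝ} (hh : h ∈ Wsq n d ℓ) : c • h ∈ Wsq n d ℓ := by
  obtain ⟨k, F, G, hF, hG, rfl⟩ := hh
  refine ⟨k, F, fun i => c • G i, hF, ?_, ?_⟩
  · intro i
    rw [← mem_homogeneousSubmodule] at *
    exact Submodule.smul_mem _ c (hG i)
  · rw [symmetrize_eq, symmetrize_eq, ← map_smul]
    congr 1
    rw [Finset.smul_sum]
    exact Finset.sum_congr rfl fun i _ => (mul_smul_comm c (F i) (G i)).symm

/-- `W_ℓ^{<2>}` as a submodule. -/
noncomputable def WsqSub (n d : ℕ) (ℓ : MvPolynomial (Fin n) ℝ →ₗ[ℝ] ℝ) :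
    Submodule ℝ (MvPolynomial (Fin n) ℝ) where
  carrier := Wsq n d ℓ
  zero_mem' := Wsq_zero_mem n d ℓ
  add_mem' := Wsq_add_mem
  smul_mem' := Wsq_smul_mem

lemma Fdeg_add {σ : Type*} (a b : σ →₀ ℕ) :
    (a + b).degree = a.degree + b.degree := by
  simp only [Finsupp.degree_eq_weight_one, map_add]

lemma Fdeg_single {σ : Type*} (i : σ) (k : ℕ) :
    (Finsupp.single i k).degree = k := by
  simp [Finsupp.degree_eq_weight_one, Finsupp.weight_apply, Finsupp.sum_single_index]

lemma isHomog_def {σ : Type*} (φ : MvPolynomial σ ℝ) (k : ℕ) :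
    φ.IsHomogeneous k ↔ ∀ μ, coeff μ φ ≠ 0 → μ.degree = k := by
  unfold IsHomogeneous IsWeightedHomogeneous
  simp [Finsupp.degree_eq_weight_one]
  exact Iff.rfl

lemma sos_decomp {R : Type*} [CommRing R] {g : R} (hg : IsSumSq g) :
    ∃ (m : ℕ) (h : Fin m → R), g = ∑ i, h i * h i := by
  induction hg with
  | zero => exact ⟨0, Fin.elim0, by simp⟩
  | sq_add a hS ih =>
    obtain ⟨m, h, rfl⟩ := ih
    exact ⟨m + 1, Fin.cons a h, by rw [Fin.sum_univ_succ]; simp⟩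

lemma sum_sq_eq_zero {n m : ℕ} {h : Fin m → MvPolynomial (Fin n) ℝ}
    (H : ∑ i, h i * h i = 0) : ∀ i, h i = 0 := by
  intro i
  have key : ∀ x : Fin n → ℝ, eval x (h i) = 0 := by
    intro x
    have h0 : ∑ j, (eval x (h j))^2 = 0 := by
      have := congrArg (eval x) H
      simpa [map_sum, sq] using this
    have := Finset.sum_eq_zero_iff_of_nonneg
      (fun j _ => sq_nonneg (eval x (h j))) |>.mp h0 i (Finset.mem_univ i)
    exact pow_eq_zero_iff (n := 2) (by norm_num) |>.mp this
  have := MvPolynomial.funext (p := h i) (q := 0) (by simpa using key)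
  exact this

/-- If `p` and `q` have no homogeneous components above degree `K`, then the
`2K`-component of `p*q` is the product of the `K`-components. -/
lemma hc_mul_max {σ : Type*} [DecidableEq σ] (p q : MvPolynomial σ ℝ) (K : ℕ)
    (hp : ∀ α : σ →₀ ℕ, K < α.degree → coeff α p = 0)
    (hq : ∀ α : σ →₀ ℕ, K < α.degree → coeff α q = 0) :
    homogeneousComponent (K + K) (p * q)
      = homogeneousComponent K p * homogeneousComponent K q := by
  ext μ
  rw [coeff_homogeneousComponent, coeff_mul, coeff_mul]
  by_cases hμ : μ.degree = K + K
  · rw [if_pos hμ]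
    refine Finset.sum_congr rfl fun x hx => ?_
    rw [Finset.HasAntidiagonal.mem_antidiagonal] at hx
    have hdeg : x.1.degree + x.2.degree = K + K := by rw [← Fdeg_add, hx, hμ]
    rw [coeff_homogeneousComponent, coeff_homogeneousComponent]
    by_cases h1 : x.1.degree = K
    · rw [if_pos h1, if_pos (by omega)]
    · rcases lt_or_gt_of_ne h1 with hlt | hgt
      · have : K < x.2.degree := by omega
        rw [hq _ this, if_neg h1, mul_zero, zero_mul]
      · rw [hp _ hgt, if_neg h1, zero_mul, zero_mul]
  · rw [if_neg hμ]
    symm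
    refine Finset.sum_eq_zero fun x hx => ?_
    rw [Finset.HasAntidiagonal.mem_antidiagonal] at hx
    have hdeg : x.1.degree + x.2.degree = μ.degree := by rw [← Fdeg_add, hx]
    rw [coeff_homogeneousComponent, coeff_homogeneousComponent]
    by_cases h1 : x.1.degree = K
    · have h2 : x.2.degree ≠ K := by omega
      rw [if_neg h2, mul_zero]
    · rw [if_neg h1, zero_mul]

lemma hc_mul_min {σ : Type*} [DecidableEq σ] (p q : MvPolynomial σ ℝ) (K : ℕ)
    (hp : ∀ α : σ →₀ ℕ, α.degree < K → coeff α p = 0)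
    (hq : ∀ α : σ →₀ ℕ, α.degree < K → coeff α q = 0) :
    homogeneousComponent (K + K) (p * q)
      = homogeneousComponent K p * homogeneousComponent K q := by
  ext μ
  rw [coeff_homogeneousComponent, coeff_mul, coeff_mul]
  by_cases hμ : μ.degree = K + K
  · rw [if_pos hμ]
    refine Finset.sum_congr rfl fun x hx => ?_
    rw [Finset.HasAntidiagonal.mem_antidiagonal] at hx
    have hdeg : x.1.degree + x.2.degree = K + K := by rw [← Fdeg_add, hx, hμ]
    rw [coeff_homogeneousComponent, coeff_homogeneousComponent]
    by_cases h1 : x.1.degree = K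
    · rw [if_pos h1, if_pos (by omega)]
    · rcases lt_or_gt_of_ne h1 with hlt | hgt
      · rw [hp _ hlt, if_neg h1, zero_mul, zero_mul]
      · have : x.2.degree < K := by omega
        rw [hq _ this, if_neg h1, mul_zero, zero_mul]
  · rw [if_neg hμ]
    symm
    refine Finset.sum_eq_zero fun x hx => ?_
    rw [Finset.HasAntidiagonal.mem_antidiagonal] at hx
    have hdeg : x.1.degree + x.2.degree = μ.degree := by rw [← Fdeg_add, hx]
    rw [coeff_homogeneousComponent, coeff_homogeneousComponent]
    by_cases h1 : x.1.degree = K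
    · have h2 : x.2.degree ≠ K := by omega
      rw [if_neg h2, mul_zero]
    · rw [if_neg h1, zero_mul]

lemma sos_parts_homog {n d m : ℕ} (h : Fin m → MvPolynomial (Fin n) ℝ)
    (hg : (∑ i, h i * h i).IsHomogeneous (2 * d)) : ∀ i, (h i).IsHomogeneous d := by
  classical
  set T : Finset ℕ :=
    Finset.univ.biUnion (fun i : Fin m => (h i).support.image Finsupp.degree) with hT
  have hmemT : ∀ (i) (μ : Fin n →₀ ℕ), coeff μ (h i) ≠ 0 → μ.degree ∈ T := fun i μ hc =>
    Finset.mem_biUnion.2 ⟨i, Finset.mem_univ i,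
      Finset.mem_image.2 ⟨μ, mem_support_iff.2 hc, rfl⟩⟩
  rcases T.eq_empty_or_nonempty with hTe | hne
  · intro i
    rw [isHomog_def]
    intro μ hc
    exact absurd (hmemT i μ hc) (by rw [hTe]; simp)
  · have hgmem : (∑ i, h i * h i) ∈ homogeneousSubmodule (Fin n) ℝ (2 * d) :=
      (mem_homogeneousSubmodule _ _).2 hg
    have hchain : ∀ K : ℕ, K ∈ T →
        (∃ i₀, homogeneousComponent K (h i₀) ≠ 0) := by
      intro K hK
      obtain ⟨i₀, -, hi₀⟩ := Finset.mem_biUnion.1 hK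
      obtain ⟨μ₀, hμ₀s, hμ₀d⟩ := Finset.mem_image.1 hi₀
      refine ⟨i₀, fun h0 => ?_⟩
      have hco : coeff μ₀ (homogeneousComponent K (h i₀)) = coeff μ₀ (h i₀) := by
        rw [coeff_homogeneousComponent, if_pos hμ₀d]
      rw [h0, coeff_zero] at hco
      exact (mem_support_iff.1 hμ₀s) hco.symm
    -- max argument
    have hmax : T.max' hne = d := by
      set K := T.max' hne with hK
      have hbound : ∀ (i) (α : Fin n →₀ ℕ), K < α.degree → coeff α (h i) = 0 := by
        intro i α hα
        by_contra hc
        exact absurd (T.le_max' _ (hmemT i α hc)) (not_le.2 hα)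
      obtain ⟨i₀, hi₀⟩ := hchain K (T.max'_mem hne)
      have hsum : homogeneousComponent (K + K) (∑ i, h i * h i)
          = ∑ i, homogeneousComponent K (h i) * homogeneousComponent K (h i) := by
        rw [map_sum]
        exact Finset.sum_congr rfl fun i _ => hc_mul_max _ _ K (hbound i) (hbound i)
      have hKd : K + K = 2 * d := by
        by_contra hKd
        have h0 : homogeneousComponent (K + K) (∑ i, h i * h i) = 0 := by
          rw [homogeneousComponent_of_mem hgmem, if_neg hKd]
        rw [hsum] at h0
        exact hi₀ (sum_sq_eq_zero h0 i₀)
      omega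
    -- min argument
    have hmin : T.min' hne = d := by
      set K := T.min' hne with hK
      have hbound : ∀ (i) (α : Fin n →₀ ℕ), α.degree < K → coeff α (h i) = 0 := by
        intro i α hα
        by_contra hc
        exact absurd (T.min'_le _ (hmemT i α hc)) (not_le.2 hα)
      obtain ⟨i₀, hi₀⟩ := hchain K (T.min'_mem hne)
      have hsum : homogeneousComponent (K + K) (∑ i, h i * h i)
          = ∑ i, homogeneousComponent K (h i) * homogeneousComponent K (h i) := by
        rw [map_sum]
        exact Finset.sum_congr rfl fun i _ => hc_mul_min _ _ K (hbound i) (hbound i)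
      have hKd : K + K = 2 * d := by
        by_contra hKd
        have h0 : homogeneousComponent (K + K) (∑ i, h i * h i) = 0 := by
          rw [homogeneousComponent_of_mem hgmem, if_neg hKd]
        rw [hsum] at h0
        exact hi₀ (sum_sq_eq_zero h0 i₀)
      omega
    intro i
    rw [isHomog_def]
    intro μ hc
    have hmem := hmemT i μ hc
    have h1 := T.min'_le _ hmem
    have h2 := T.le_max' _ hmem
    omega

instance homogSubFD (n d : ℕ) :
    FiniteDimensional ℝ (homogeneousSubmodule (Fin n) ℝ d) := by
  have hle : homogeneousSubmodule (Fin n) ℝ d ≤ restrictTotalDegree (Fin n) ℝ d := by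
    intro p hp
    rw [mem_restrictTotalDegree]
    exact IsHomogeneous.totalDegree_le hp
  exact Submodule.finiteDimensional_of_le hle

lemma exists_vanishing_functional {P : Type*} [AddCommGroup P] [Module ℝ P]
    (S : Submodule ℝ P) (g₀ : P) (hg₀ : g₀ ∉ S) :
    ∃ m : P →ₗ[ℝ] ℝ, (∀ x ∈ S, m x = 0) ∧ m g₀ = 1 := by
  have hq : S.mkQ g₀ ≠ 0 := by
    rw [Submodule.mkQ_apply, ne_eq, Submodule.Quotient.mk_eq_zero]
    exact hg₀
  have : ¬(∀ φ : Module.Dual ℝ (P ⧸ S), φ (S.mkQ g₀) = 0) := by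
    rw [Module.forall_dual_apply_eq_zero_iff]
    exact hq
  push_neg at this
  obtain ⟨φ, hφ⟩ := this
  refine ⟨(φ (S.mkQ g₀))⁻¹ • (φ.comp S.mkQ), fun x hx => ?_, ?_⟩
  · simp [Submodule.Quotient.mk_eq_zero _ |>.2 hx]
  · simp only [LinearMap.smul_apply, LinearMap.comp_apply, smul_eq_mul]
    exact inv_mul_cancel₀ hφ

lemma bilin_ker_of_diag_zero {V : Type*} [AddCommGroup V] [Module ℝ V]
    (B : V →ₗ[ℝ] V →ₗ[ℝ] ℝ) (hBs : ∀ x y, B x y = B y x) (hB0 : ∀ x, 0 ≤ B x x)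
    {x : V} (hx : B x x = 0) : B x = 0 := by
  ext y
  rw [LinearMap.zero_apply]
  apply aux_cs (b := B y y)
  intro t
  have h0 := hB0 (x + t • y)
  have hexp : B (x + t • y) (x + t • y)
      = B x x + t * B x y + (t * B y x + t ^ 2 * B y y) := by
    simp only [map_add, map_smul, LinearMap.add_apply, LinearMap.smul_apply, smul_eq_mul]
    ring
  rw [hexp, hx, ← hBs x y] at h0
  linarith

lemma fd_bound {V : Type*} [AddCommGroup V] [Module ℝ V] [FiniteDimensional ℝ V]
    (B C : V →ₗ[ℝ] V →ₗ[ℝ] ℝ)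
    (hBs : ∀ x y, B x y = B y x) (hCs : ∀ x y, C x y = C y x)
    (hB0 : ∀ x, 0 ≤ B x x) (hker : ∀ x, B x x = 0 → ∀ y, C x y = 0) :
    ∃ M : ℝ, 0 ≤ M ∧ ∀ x, |C x x| ≤ M * B x x := by
  classical
  obtain ⟨U, hU⟩ := Submodule.exists_isCompl (LinearMap.ker B)
  have hdecomp : ∀ x : V, ∃ u : U, B x x = B u u ∧ C x x = C u u := by
    intro x
    have hx : x ∈ LinearMap.ker B ⊔ U := by rw [hU.sup_eq_top]; trivial
    obtain ⟨w, hw, u, hu, hwu⟩ := Submodule.mem_sup.1 hx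
    have hBw : ∀ y, B w y = 0 := fun y => by
      rw [LinearMap.mem_ker.1 hw]; rfl
    have hBuw : B u w = 0 := by rw [hBs u w]; exact hBw u
    have hCw : ∀ y, C w y = 0 := hker w (hBw w)
    have hCuw : C u w = 0 := by rw [hCs u w]; exact hCw u
    refine ⟨⟨u, hu⟩, ?_, ?_⟩
    · have e : B x x = B w w + B w u + (B u w + B u u) := by
        rw [← hwu]; simp only [map_add, LinearMap.add_apply]; try ring
      rw [e, hBw, hBw, hBuw]; ring
    · have e : C x x = C w w + C w u + (C u w + C u u) := by
        rw [← hwu]; simp only [map_add, LinearMap.add_apply]; try ring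
      rw [e, hCw, hCw, hCuw]; ring
  suffices hUbound : ∃ M : ℝ, 0 ≤ M ∧ ∀ u : U, |C u u| ≤ M * B u u by
    obtain ⟨M, hM0, hM⟩ := hUbound
    refine ⟨M, hM0, fun x => ?_⟩
    obtain ⟨u, hBx, hCx⟩ := hdecomp x
    rw [hBx, hCx]
    exact hM u
  have hBsymm : B.IsSymm := ⟨fun x y => by simpa using hBs x y⟩
  haveI : Invertible (2 : ℝ) := invertibleOfNonzero two_ne_zero
  obtain ⟨v, hv⟩ := LinearMap.BilinForm.exists_orthogonal_basis (hBsymm.domRestrict U)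
  have horth : ∀ i j, i ≠ j →
      B ((v i : U) : V) ((v j : U) : V) = 0 := fun i j hij => hv hij
  have hbpos : ∀ i, 0 < B ((v i : U) : V) ((v i : U) : V) := by
    intro i
    rcases lt_or_eq_of_le (hB0 ((v i : U) : V)) with h | h
    · exact h
    · exfalso
      have hBvi : B ((v i : U) : V) = 0 :=
        bilin_ker_of_diag_zero B hBs hB0 h.symm
      have hmem : ((v i : U) : V) ∈ LinearMap.ker B ⊓ U :=
        ⟨LinearMap.mem_ker.2 hBvi, (v i).2⟩
      rw [hU.inf_eq_bot] at hmem
      exact Module.Basis.ne_zero v i (Subtype.ext (by simpa using hmem))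
  set b : Fin (Module.finrank ℝ U) → ℝ := fun i => B ((v i : U) : V) ((v i : U) : V)
    with hbdef
  rcases isEmpty_or_nonempty (Fin (Module.finrank ℝ U)) with hempty | hnon
  · refine ⟨0, le_refl 0, fun u => ?_⟩
    have hu0 : u = 0 := by
      have := Module.Basis.sum_repr v u
      rw [Finset.univ_eq_empty, Finset.sum_empty] at this
      exact this.symm
    simp [hu0]
  set bmin : ℝ := Finset.univ.inf' Finset.univ_nonempty b with hbmin
  have hbminpos : 0 < bmin := by
    rw [hbmin, Finset.lt_inf'_iff]
    exact fun i _ => hbpos i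
  have hbmin_le : ∀ i, bmin ≤ b i := fun i =>
    Finset.inf'_le _ (Finset.mem_univ i)
  set Csum : ℝ := ∑ i, ∑ j, |C ((v i : U) : V) ((v j : U) : V)| with hCsum
  refine ⟨Csum / bmin, by positivity, fun u => ?_⟩
  set a : Fin (Module.finrank ℝ U) → ℝ := fun i => v.repr u i with ha
  have hrep : ∑ i, a i • (v i : U) = u := Module.Basis.sum_repr v u
  have hrepV : ∑ i, a i • ((v i : U) : V) = (u : V) := by
    have := congrArg (Submodule.subtype U) hrep
    simpa [map_sum] using this
  have happly : ∀ (D : V →ₗ[ℝ] V →ₗ[ℝ] ℝ) (y : V),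
      D (u : V) y = ∑ i, a i * D ((v i : U) : V) y := by
    intro D y
    rw [← hrepV, map_sum, LinearMap.sum_apply]
    exact Finset.sum_congr rfl fun i _ => by
      rw [map_smul, LinearMap.smul_apply, smul_eq_mul]
  have hBvi : ∀ i, B ((v i : U) : V) (u : V) = a i * b i := by
    intro i
    conv_lhs => rw [← hrepV]
    rw [map_sum]
    rw [Finset.sum_eq_single i
      (fun j _ hji => by rw [map_smul, horth i j (Ne.symm hji), smul_zero])
      (fun hi => absurd (Finset.mem_univ i) hi)]
    rw [map_smul, smul_eq_mul]
  have hCvi : ∀ i, C ((v i : U) : V) (u : V)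
      = ∑ j, a j * C ((v i : U) : V) ((v j : U) : V) := by
    intro i
    conv_lhs => rw [← hrepV]
    rw [map_sum]
    exact Finset.sum_congr rfl fun j _ => by rw [map_smul, smul_eq_mul]
  have hBuu : B (u : V) (u : V) = ∑ i, a i * (a i * b i) := by
    rw [happly B (u : V)]
    exact Finset.sum_congr rfl fun i _ => by rw [hBvi]
  have hCuu : C (u : V) (u : V)
      = ∑ i, a i * (∑ j, a j * C ((v i : U) : V) ((v j : U) : V)) := by
    rw [happly C (u : V)]
    exact Finset.sum_congr rfl fun i _ => by rw [hCvi]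
  have hterm_nonneg : ∀ i, 0 ≤ a i * (a i * b i) := fun i => by
    rw [← mul_assoc]; exact mul_nonneg (mul_self_nonneg _) (hbpos i).le
  have ha2 : ∀ i, a i * a i ≤ B (u : V) (u : V) / bmin := by
    intro i
    rw [le_div_iff₀ hbminpos]
    calc a i * a i * bmin ≤ a i * (a i * b i) := by
          have := hbmin_le i
          nlinarith [mul_self_nonneg (a i)]
      _ ≤ B (u : V) (u : V) := by
          rw [hBuu]
          exact Finset.single_le_sum (fun j _ => hterm_nonneg j) (Finset.mem_univ i)
  have habs : ∀ i j, |a i| * |a j| ≤ B (u : V) (u : V) / bmin := by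
    intro i j
    have h1 := ha2 i
    have h2 := ha2 j
    nlinarith [sq_nonneg (|a i| - |a j|), abs_nonneg (a i), abs_nonneg (a j),
      abs_mul_abs_self (a i), abs_mul_abs_self (a j)]
  have hBuu_nonneg : 0 ≤ B (u : V) (u : V) := hB0 (u : V)
  calc |C (u : V) (u : V)|
      ≤ ∑ i, ∑ j, |a i * (a j * C ((v i : U) : V) ((v j : U) : V))| := by
        rw [hCuu]
        refine (Finset.abs_sum_le_sum_abs _ _).trans ?_
        refine Finset.sum_le_sum fun i _ => ?_
        rw [abs_mul]
        calc |a i| * |∑ j, a j * C ((v i : U) : V) ((v j : U) : V)|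
            ≤ |a i| * ∑ j, |a j * C ((v i : U) : V) ((v j : U) : V)| :=
              mul_le_mul_of_nonneg_left (Finset.abs_sum_le_sum_abs _ _) (abs_nonneg _)
          _ = ∑ j, |a i| * |a j * C ((v i : U) : V) ((v j : U) : V)| := by
              rw [Finset.mul_sum]
          _ = ∑ j, |a i * (a j * C ((v i : U) : V) ((v j : U) : V))| :=
              Finset.sum_congr rfl fun j _ => by rw [← abs_mul]
    _ ≤ ∑ i, ∑ j, (B (u : V) (u : V) / bmin) * |C ((v i : U) : V) ((v j : U) : V)| := by
        refine Finset.sum_le_sum fun i _ => Finset.sum_le_sum fun j _ => ?_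
        rw [abs_mul, abs_mul, ← mul_assoc]
        exact mul_le_mul_of_nonneg_right (habs i j) (abs_nonneg _)
    _ = (Csum / bmin) * B (u : V) (u : V) := by
        simp only [← Finset.mul_sum]
        ring

lemma exists_le_degree {n : ℕ} (k : ℕ) (α : Fin n →₀ ℕ) (hk : k ≤ α.degree) :
    ∃ β : Fin n →₀ ℕ, β ≤ α ∧ β.degree = k := by
  induction k with
  | zero => exact ⟨0, zero_le, map_zero _⟩
  | succ k ih =>
    obtain ⟨β, hβle, hβdeg⟩ := ih (Nat.le_of_succ_le hk)
    have hne : ∃ i, β i < α i := by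
      by_contra hc
      push_neg at hc
      have : β = α := le_antisymm hβle (Finsupp.le_def.2 hc)
      rw [this] at hβdeg
      omega
    obtain ⟨i, hi⟩ := hne
    refine ⟨β + Finsupp.single i 1, ?_, ?_⟩
    · rw [Finsupp.le_def]
      intro j
      rcases eq_or_ne j i with rfl | hj
      · simpa [Finsupp.single_eq_same] using hi
      · simp only [Finsupp.add_apply, Finsupp.single_apply, if_neg (Ne.symm hj), add_zero]
        exact Finsupp.le_def.1 hβle j
    · rw [Fdeg_add, hβdeg, Fdeg_single]

lemma exists_split {n d : ℕ} (α : Fin n →₀ ℕ) (hα : α.degree = 2 * d) :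
    ∃ β γ : Fin n →₀ ℕ, β + γ = α ∧ β.degree = d ∧ γ.degree = d := by
  obtain ⟨β, hβle, hβdeg⟩ := exists_le_degree d α (by omega)
  refine ⟨β, α - β, ?_, hβdeg, ?_⟩
  · rw [add_tsub_cancel_of_le hβle]
  · have h : β + (α - β) = α := add_tsub_cancel_of_le hβle
    have := Fdeg_add β (α - β)
    rw [h, hα, hβdeg] at this
    omega

lemma all_mem_Wsq {n d : ℕ} {ℓ : MvPolynomial (Fin n) ℝ →ₗ[ℝ] ℝ}
    (hall : ∀ p : MvPolynomial (Fin n) ℝ, p.IsHomogeneous d →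
      ℓ (symmetrize n (p ^ 2)) = 0)
    {g : MvPolynomial (Fin n) ℝ} (hg : IsSymmetricForm n (2 * d) g) :
    g ∈ Wsq n d ℓ := by
  classical
  have hdeg : ∀ α : g.support, (α : Fin n →₀ ℕ).degree = 2 * d := by
    intro α
    exact (isHomog_def _ _).1 hg.2 _ (mem_support_iff.1 α.2)
  choose β γ hβγ hβd hγd using fun α : g.support =>
    exists_split (α : Fin n →₀ ℕ) (hdeg α)
  set e := g.support.equivFin with he
  refine ⟨g.support.card,
    fun i => monomial (β (e.symm i)) (coeff (e.symm i) g),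
    fun i => monomial (γ (e.symm i)) 1, ?_, ?_, ?_⟩
  · intro i
    exact ⟨isHomogeneous_monomial _ (hβd _),
      hall _ (isHomogeneous_monomial _ (hβd _))⟩
  · intro i
    exact isHomogeneous_monomial _ (hγd _)
  · have hsum : (∑ i, monomial (β (e.symm i)) (coeff (e.symm i) g)
        * monomial (γ (e.symm i)) 1) = g := by
      have hterm : ∀ α : g.support,
          monomial (β α) (coeff (α : Fin n →₀ ℕ) g) * monomial (γ α) 1
            = monomial (α : Fin n →₀ ℕ) (coeff (α : Fin n →₀ ℕ) g) := by
        intro α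
        rw [monomial_mul, hβγ, mul_one]
      calc (∑ i, monomial (β (e.symm i)) (coeff (e.symm i) g)
            * monomial (γ (e.symm i)) 1)
          = ∑ α : g.support, monomial (β α) (coeff (α : Fin n →₀ ℕ) g)
            * monomial (γ α) 1 := Equiv.sum_comp e.symm (fun α : g.support => monomial (β α) (coeff (α : Fin n →₀ ℕ) g) * monomial (γ α) 1)
        _ = ∑ α : g.support, monomial (α : Fin n →₀ ℕ) (coeff (α : Fin n →₀ ℕ) g) :=
            Finset.sum_congr rfl fun α _ => hterm α
        _ = ∑ α ∈ g.support, monomial α (coeff α g) := Finset.sum_coe_sort _ (fun α => monomial α (coeff α g))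
        _ = g := support_sum_monomial_coeff g
    rw [hsum, symmetrize_symm n hg.1]

lemma isSymmetricForm_sub_smul {n k : ℕ} {g g' : MvPolynomial (Fin n) ℝ}
    (hg : IsSymmetricForm n k g) (hg' : IsSymmetricForm n k g') (c : ℝ) :
    IsSymmetricForm n k (g - c • g') := by
  constructor
  · intro e
    have h1 := hg.1 e
    have h2 := hg'.1 e
    rw [map_sub, smul_eq_C_mul, map_mul, rename_C, h1, h2, ← smul_eq_C_mul]
  · exact Submodule.sub_mem (homogeneousSubmodule (Fin n) ℝ k) hg.2
      (Submodule.smul_mem _ c hg'.2)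

set_option maxHeartbeats 2000000 in
/-- A nonzero `ℓ` in the dual cone of the symmetric sums of squares spans an
extreme ray (every decomposition `ℓ = m₁ + m₂` within the dual cone has both
summands nonnegative multiples of `ℓ`, as functionals on `H^S_{n,2d}`) if and
only if `W_ℓ^{<2>}` is a hyperplane in `H^S_{n,2d}`. -/
theorem extreme_ray_iff_hyperplane (n d : ℕ) (hn : 2 * d ≤ n)
    (ℓ : MvPolynomial (Fin n) ℝ →ₗ[ℝ] ℝ)
    (hmem : MemDualSos n (2 * d) ℓ)
    (hne : ∃ g : MvPolynomial (Fin n) ℝ, IsSymmetricForm n (2 * d) g ∧ ℓ g ≠ 0) :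
    (∀ m₁ m₂ : MvPolynomial (Fin n) ℝ →ₗ[ℝ] ℝ,
        MemDualSos n (2 * d) m₁ → MemDualSos n (2 * d) m₂ →
        (∀ g, IsSymmetricForm n (2 * d) g → ℓ g = m₁ g + m₂ g) →
        (∃ t : ℝ, 0 ≤ t ∧ ∀ g, IsSymmetricForm n (2 * d) g → m₁ g = t * ℓ g) ∧
        (∃ t : ℝ, 0 ≤ t ∧ ∀ g, IsSymmetricForm n (2 * d) g → m₂ g = t * ℓ g)) ↔
    (∃ f0 : MvPolynomial (Fin n) ℝ, IsSymmetricForm n (2 * d) f0 ∧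
        f0 ∉ Wsq n d ℓ ∧
        ∀ g, IsSymmetricForm n (2 * d) g →
          ∃ w ∈ Wsq n d ℓ, ∃ t : ℝ, g = w + t • f0) := by
  obtain ⟨g₁, hg₁, hℓg₁⟩ := hne
  constructor
  · -- extreme ⟹ hyperplane
    intro hext
    have key : ∀ g₀, IsSymmetricForm n (2 * d) g₀ → ℓ g₀ = 0 → g₀ ∈ Wsq n d ℓ := by
      intro g₀ hg₀ hℓg₀
      by_contra hg₀W
      obtain ⟨m, hmW, hmg₀⟩ := exists_vanishing_functional (WsqSub n d ℓ) g₀ hg₀W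
      set X := homogeneousSubmodule (Fin n) ℝ d with hX
      set B := (Bf n ℓ).domRestrict₁₂ X X with hB
      set Cm := (Bf n m).domRestrict₁₂ X X with hCm
      have hBs : ∀ x y : X, B x y = B y x := fun x y => Bf_symm n ℓ x y
      have hCs : ∀ x y : X, Cm x y = Cm y x := fun x y => Bf_symm n m x y
      have hB0 : ∀ x : X, 0 ≤ B x x := fun x => Bf_nonneg hmem x.2
      have hker : ∀ x : X, B x x = 0 → ∀ y : X, Cm x y = 0 := by
        intro x hx y
        have hxsq : ℓ (symmetrize n ((x : MvPolynomial (Fin n) ℝ) ^ 2)) = 0 := by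
          rw [sq]
          rw [← Bf_apply]
          exact hx
        have hmemW : symmetrize n ((x : MvPolynomial (Fin n) ℝ)
            * (y : MvPolynomial (Fin n) ℝ)) ∈ Wsq n d ℓ := by
          refine ⟨1, fun _ => (x : MvPolynomial (Fin n) ℝ),
            fun _ => (y : MvPolynomial (Fin n) ℝ),
            fun _ => ⟨x.2, hxsq⟩, fun _ => y.2, ?_⟩
          rw [Fin.sum_univ_one]
        have : Cm x y = m (symmetrize n ((x : MvPolynomial (Fin n) ℝ)
            * (y : MvPolynomial (Fin n) ℝ))) := Bf_apply n m _ _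
        rw [this, hmW _ hmemW]
      obtain ⟨M, hM0, hMb⟩ := fd_bound B Cm hBs hCs hB0 hker
      set ε : ℝ := (M + 1)⁻¹ with hεdef
      have hε : 0 < ε := by positivity
      have hεM : ε * M ≤ 1 := by
        rw [hεdef]
        rw [inv_mul_le_iff₀ (by linarith)]
        linarith
      have hpos : ∀ p : MvPolynomial (Fin n) ℝ, p.IsHomogeneous d →
          0 ≤ ℓ (symmetrize n (p * p)) + ε * m (symmetrize n (p * p)) ∧
          0 ≤ ℓ (symmetrize n (p * p)) - ε * m (symmetrize n (p * p)) := by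
        intro p hp
        have hb := hMb ⟨p, hp⟩
        have hBpp : B ⟨p, hp⟩ ⟨p, hp⟩ = ℓ (symmetrize n (p * p)) := Bf_apply n ℓ p p
        have hCpp : Cm ⟨p, hp⟩ ⟨p, hp⟩ = m (symmetrize n (p * p)) := Bf_apply n m p p
        rw [hBpp, hCpp] at hb
        have hBnn : 0 ≤ ℓ (symmetrize n (p * p)) := by
          rw [← hBpp]; exact hB0 ⟨p, hp⟩
        have habs := abs_le.1 hb
        constructor <;> nlinarith [habs.1, habs.2]
      set m₁ : MvPolynomial (Fin n) ℝ →ₗ[ℝ] ℝ := (1/2 : ℝ) • (ℓ + ε • m) with hm₁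
      set m₂ : MvPolynomial (Fin n) ℝ →ₗ[ℝ] ℝ := (1/2 : ℝ) • (ℓ - ε • m) with hm₂
      have hm₁ap : ∀ g, m₁ g = (1/2) * (ℓ g + ε * m g) := fun g => by
        simp [hm₁, LinearMap.smul_apply, LinearMap.add_apply]; try ring
      have hm₂ap : ∀ g, m₂ g = (1/2) * (ℓ g - ε * m g) := fun g => by
        simp [hm₂, LinearMap.smul_apply, LinearMap.sub_apply]; try ring
      have hsplit : ∀ (μ : MvPolynomial (Fin n) ℝ →ₗ[ℝ] ℝ)
          (g : MvPolynomial (Fin n) ℝ), IsSymmetricForm n (2 * d) g → IsSumSq g →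
          ∃ (k : ℕ) (h : Fin k → MvPolynomial (Fin n) ℝ),
            (∀ i, (h i).IsHomogeneous d) ∧ μ g = ∑ i, μ (symmetrize n (h i * h i)) := by
        intro μ g hgf hgs
        obtain ⟨k, h, rfl⟩ := sos_decomp hgs
        refine ⟨k, h, sos_parts_homog h hgf.2, ?_⟩
        conv_lhs => rw [← symmetrize_symm n hgf.1]
        rw [symmetrize_eq, map_sum, map_sum]
        exact Finset.sum_congr rfl fun i _ => by rw [symmetrize_eq]
      have hd1 : MemDualSos n (2 * d) m₁ := by
        intro g hgf hgs
        obtain ⟨k, h, hh, hrw⟩ := hsplit m₁ g hgf hgs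
        rw [hrw]
        refine Finset.sum_nonneg fun i _ => ?_
        rw [hm₁ap]
        have := (hpos (h i) (hh i)).1
        linarith
      have hd2 : MemDualSos n (2 * d) m₂ := by
        intro g hgf hgs
        obtain ⟨k, h, hh, hrw⟩ := hsplit m₂ g hgf hgs
        rw [hrw]
        refine Finset.sum_nonneg fun i _ => ?_
        rw [hm₂ap]
        have := (hpos (h i) (hh i)).2
        linarith
      have hsum : ∀ g, IsSymmetricForm n (2 * d) g → ℓ g = m₁ g + m₂ g := by
        intro g _
        rw [hm₁ap, hm₂ap]; ring
      obtain ⟨⟨t, ht0, htm⟩, -⟩ := hext m₁ m₂ hd1 hd2 hsum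
      have h1 := htm g₀ hg₀
      rw [hℓg₀, mul_zero, hm₁ap, hℓg₀, hmg₀] at h1
      have : ε = 0 := by linarith
      exact absurd this (ne_of_gt hε)
    refine ⟨g₁, hg₁, fun hW => hℓg₁ (Wsq_apply_eq_zero hmem hW), ?_⟩
    intro g hgf
    refine ⟨g - (ℓ g / ℓ g₁) • g₁, key _ (isSymmetricForm_sub_smul hgf hg₁ _) ?_,
      ℓ g / ℓ g₁, by ring⟩
    rw [map_sub, map_smul, smul_eq_mul, div_mul_cancel₀ _ hℓg₁, sub_self]
  · -- hyperplane ⟹ extreme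
    rintro ⟨f0, hf0f, hf0W, hspan⟩ m₁ m₂ hd1 hd2 hsum
    have hℓf0 : ℓ f0 ≠ 0 := by
      intro h0
      obtain ⟨w, hw, t, rfl⟩ := hspan g₁ hg₁
      apply hℓg₁
      rw [map_add, map_smul, Wsq_apply_eq_zero hmem hw, h0, smul_zero, add_zero]
    have hQzero : ∀ (μ : MvPolynomial (Fin n) ℝ →ₗ[ℝ] ℝ), MemDualSos n (2 * d) μ →
        (∀ g, IsSymmetricForm n (2 * d) g → IsSumSq g → μ g ≤ ℓ g) →
        ∀ h ∈ Wsq n d ℓ, μ h = 0 := by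
      intro μ hdμ hle h hh
      obtain ⟨k, F, G, hF, hG, rfl⟩ := hh
      rw [symmetrize_eq, map_sum, map_sum]
      refine Finset.sum_eq_zero fun i _ => ?_
      have hQ : μ (symmetrize n (F i ^ 2)) = 0 := by
        have hform := symmForm_symmetrize_sq n d (hF i).1
        have hsos := isSumSq_symmetrize_sq n (F i)
        have h1 := hdμ _ hform hsos
        have h2 := hle _ hform hsos
        rw [(hF i).2] at h2
        linarith
      have hBf : Bf n μ (F i) (F i) = 0 := by rw [Bf_apply, ← sq]; exact hQ
      have := Bf_zero_of_ker hdμ (hF i).1 (hG i) hBf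
      rw [Bf_apply, symmetrize_eq] at this
      exact this
    have hle1 : ∀ g, IsSymmetricForm n (2 * d) g → IsSumSq g → m₁ g ≤ ℓ g := by
      intro g hgf hgs
      have := hd2 g hgf hgs
      have := hsum g hgf
      linarith
    have hle2 : ∀ g, IsSymmetricForm n (2 * d) g → IsSumSq g → m₂ g ≤ ℓ g := by
      intro g hgf hgs
      have := hd1 g hgf hgs
      have := hsum g hgf
      linarith
    have hv1 := hQzero m₁ hd1 hle1
    have hv2 := hQzero m₂ hd2 hle2
    have hrep : ∀ (μ : MvPolynomial (Fin n) ℝ →ₗ[ℝ] ℝ),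
        (∀ h ∈ Wsq n d ℓ, μ h = 0) →
        ∀ g, IsSymmetricForm n (2 * d) g → μ g = (μ f0 / ℓ f0) * ℓ g := by
      intro μ hμW g hgf
      obtain ⟨w, hw, t, rfl⟩ := hspan g hgf
      rw [map_add, map_smul, map_add, map_smul, hμW _ hw,
        Wsq_apply_eq_zero hmem hw, smul_eq_mul, smul_eq_mul]
      field_simp
      ring
    -- a strictly positive direction
    have hexq : ∃ p : MvPolynomial (Fin n) ℝ, p.IsHomogeneous d ∧
        0 < ℓ (symmetrize n (p ^ 2)) := by
      by_contra hc
      push_neg at hc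
      have hall : ∀ p : MvPolynomial (Fin n) ℝ, p.IsHomogeneous d →
          ℓ (symmetrize n (p ^ 2)) = 0 := by
        intro p hp
        have h1 := hc p hp
        have h2 : 0 ≤ Bf n ℓ p p := Bf_nonneg hmem hp
        rw [Bf_apply, ← sq] at h2
        linarith
      exact hf0W (all_mem_Wsq hall hf0f)
    obtain ⟨p, hp, hppos⟩ := hexq
    have hgpform := symmForm_symmetrize_sq n d hp
    have hgpsos := isSumSq_symmetrize_sq n p
    constructor
    · refine ⟨m₁ f0 / ℓ f0, ?_, hrep m₁ hv1⟩
      have h1 := hrep m₁ hv1 _ hgpform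
      have h2 := hd1 _ hgpform hgpsos
      rw [h1] at h2
      exact nonneg_of_mul_nonneg_right (by linarith [h2] : (0:ℝ) ≤ ℓ (symmetrize n (p ^ 2)) * (m₁ f0 / ℓ f0)) hppos
    · refine ⟨m₂ f0 / ℓ f0, ?_, hrep m₂ hv2⟩
      have h1 := hrep m₂ hv2 _ hgpform
      have h2 := hd2 _ hgpform hgpsos
      rw [h1] at h2
      exact nonneg_of_mul_nonneg_right (by linarith [h2] : (0:ℝ) ≤ ℓ (symmetrize n (p ^ 2)) * (m₂ f0 / ℓ f0)) hppos
end

section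
/- Let c = (c_λ)_{λ⊢4} ∈ ℝ^5 be a coefficient vector. Then the symmetric quartic form f^{(n)} = Σ_{λ⊢4} c_λ p_λ^{(n)} is nonnegative on ℝ^n for every n ≥ 4 if and only if for all α ∈ [0,1] the bivariate quartic form Φ_c^α(x,y) := Σ_{λ⊢4} c_λ Φ_λ(α, 1−α, x, y) is nonnegative on ℝ^2. -/
open MvPolynomial

/-- The i-th normalized power sum `p_i^{(n)} = (1/n)(x_1^i + ⋯ + x_n^i)`. -/
noncomputable def psum (n i : ℕ) : MvPolynomial (Fin n) ℝ :=
  C ((n : ℝ)⁻¹) * ∑ j : Fin n, X j ^ i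

/-- For a partition `λ` of `k`, `p_λ^{(n)} = p_{λ_1}^{(n)} ⋯ p_{λ_l}^{(n)}`. -/
noncomputable def pPart (n : ℕ) {k : ℕ} (lam : Nat.Partition k) : MvPolynomial (Fin n) ℝ :=
  (lam.parts.map (psum n)).prod

/-- The symmetric form `f^{(n)} = Σ_{λ ⊢ k} c_λ p_λ^{(n)}` determined by the
coefficient vector `c`. -/
noncomputable def symForm (n : ℕ) {k : ℕ} (c : Nat.Partition k → ℝ) : MvPolynomial (Fin n) ℝ :=
  ∑ lam : Nat.Partition k, C (c lam) * pPart n lam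

/-- `Φ_λ(s,t) = ∏_{i=1}^l (s_1 t_1^{λ_i} + ⋯ + s_d t_d^{λ_i})` for a partition
`λ = (λ_1,…,λ_l)` of `k`, as a function on `ℝ^d × ℝ^d`. -/
noncomputable def phiPart {k : ℕ} (d : ℕ) (lam : Nat.Partition k) (s t : Fin d → ℝ) : ℝ :=
  (lam.parts.map (fun i => ∑ j : Fin d, s j * t j ^ i)).prod

/-- `Φ_c = Σ_{λ ⊢ k} c_λ Φ_λ`. -/
noncomputable def phiForm {k : ℕ} (d : ℕ) (c : Nat.Partition k → ℝ) (s t : Fin d → ℝ) : ℝ :=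
  ∑ lam : Nat.Partition k, c lam * phiPart d lam s t

/-! ### Auxiliary material -/

namespace MemP4Aux

def Pa : Nat.Partition 4 := ⟨{4}, by decide, by decide⟩
def Pb : Nat.Partition 4 := ⟨{3,1}, by decide, by decide⟩
def Pc' : Nat.Partition 4 := ⟨{2,2}, by decide, by decide⟩
def Pd' : Nat.Partition 4 := ⟨{2,1,1}, by decide, by decide⟩
def Pe : Nat.Partition 4 := ⟨{1,1,1,1}, by decide, by decide⟩

lemma msum0 (s : Multiset ℕ) (h : s.sum = 0) (hp : ∀ x ∈ s, 0 < x) : s = 0 := by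
  rcases s.empty_or_exists_mem with h0 | ⟨a, ha⟩
  · exact h0
  · obtain ⟨t, rfl⟩ := Multiset.exists_cons_of_mem ha
    have := hp a (Multiset.mem_cons_self _ _)
    rw [Multiset.sum_cons] at h; omega

lemma msum1 (s : Multiset ℕ) (h : s.sum = 1) (hp : ∀ x ∈ s, 0 < x) : s = {1} := by
  rcases s.empty_or_exists_mem with h0 | ⟨a, ha⟩
  · subst h0; simp at h
  · obtain ⟨t, rfl⟩ := Multiset.exists_cons_of_mem ha
    have ha' := hp a (Multiset.mem_cons_self _ _)
    rw [Multiset.sum_cons] at h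
    have hpt : ∀ x ∈ t, 0 < x := fun x hx => hp x (Multiset.mem_cons_of_mem hx)
    have hle : a = 1 := by omega
    subst hle
    rw [msum0 t (by omega) hpt]; rfl

lemma msum2 (s : Multiset ℕ) (h : s.sum = 2) (hp : ∀ x ∈ s, 0 < x) :
    s = {2} ∨ s = {1,1} := by
  rcases s.empty_or_exists_mem with h0 | ⟨a, ha⟩
  · subst h0; simp at h
  · obtain ⟨t, rfl⟩ := Multiset.exists_cons_of_mem ha
    have ha' := hp a (Multiset.mem_cons_self _ _)
    rw [Multiset.sum_cons] at h
    have hpt : ∀ x ∈ t, 0 < x := fun x hx => hp x (Multiset.mem_cons_of_mem hx)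
    have hub : a ≤ 2 := by omega
    interval_cases a
    · right; rw [msum1 t (by omega) hpt]; rfl
    · left; rw [msum0 t (by omega) hpt]; rfl

lemma msum3 (s : Multiset ℕ) (h : s.sum = 3) (hp : ∀ x ∈ s, 0 < x) :
    s = {3} ∨ s = {2,1} ∨ s = {1,1,1} := by
  rcases s.empty_or_exists_mem with h0 | ⟨a, ha⟩
  · subst h0; simp at h
  · obtain ⟨t, rfl⟩ := Multiset.exists_cons_of_mem ha
    have ha' := hp a (Multiset.mem_cons_self _ _)
    rw [Multiset.sum_cons] at h
    have hpt : ∀ x ∈ t, 0 < x := fun x hx => hp x (Multiset.mem_cons_of_mem hx)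
    have hub : a ≤ 3 := by omega
    interval_cases a
    · rcases msum2 t (by omega) hpt with h2 | h2 <;> rw [h2]
      · right; left; exact Multiset.cons_swap 1 2 0 ▸ rfl
      · right; right; rfl
    · right; left; rw [msum1 t (by omega) hpt]; rfl
    · left; rw [msum0 t (by omega) hpt]; rfl

lemma msum4 (s : Multiset ℕ) (h : s.sum = 4) (hp : ∀ x ∈ s, 0 < x) :
    s = {4} ∨ s = {3,1} ∨ s = {2,2} ∨ s = {2,1,1} ∨ s = {1,1,1,1} := by
  rcases s.empty_or_exists_mem with h0 | ⟨a, ha⟩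
  · subst h0; simp at h
  · obtain ⟨t, rfl⟩ := Multiset.exists_cons_of_mem ha
    have ha' := hp a (Multiset.mem_cons_self _ _)
    rw [Multiset.sum_cons] at h
    have hpt : ∀ x ∈ t, 0 < x := fun x hx => hp x (Multiset.mem_cons_of_mem hx)
    have hub : a ≤ 4 := by omega
    interval_cases a
    · rcases msum3 t (by omega) hpt with h2 | h2 | h2 <;> rw [h2]
      · right; left; exact Multiset.cons_swap 1 3 0 ▸ rfl
      · right; right; right; left
        show (1 ::ₘ 2 ::ₘ {1}) = (2 ::ₘ 1 ::ₘ {1})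
        rw [Multiset.cons_swap]
      · right; right; right; right; rfl
    · rcases msum2 t (by omega) hpt with h2 | h2 <;> rw [h2]
      · right; right; left; rfl
      · right; right; right; left; rfl
    · right; left; rw [msum1 t (by omega) hpt]; rfl
    · left; rw [msum0 t (by omega) hpt]; rfl

lemma univ_eq : (Finset.univ : Finset (Nat.Partition 4)) = {Pa, Pb, Pc', Pd', Pe} := by
  symm
  rw [Finset.eq_univ_iff_forall]
  intro p
  simp only [Finset.mem_insert, Finset.mem_singleton]
  rcases msum4 p.parts p.parts_sum (fun x hx => p.parts_pos hx) with h|h|h|h|h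
  · exact Or.inl (Nat.Partition.ext h)
  · exact Or.inr (Or.inl (Nat.Partition.ext h))
  · exact Or.inr (Or.inr (Or.inl (Nat.Partition.ext h)))
  · exact Or.inr (Or.inr (Or.inr (Or.inl (Nat.Partition.ext h))))
  · exact Or.inr (Or.inr (Or.inr (Or.inr (Nat.Partition.ext h))))

lemma phiForm_eq (d : ℕ) (c : Nat.Partition 4 → ℝ) (s t : Fin d → ℝ) :
    phiForm d c s t =
      c Pa * (∑ j, s j * t j ^ 4)
      + c Pb * ((∑ j, s j * t j ^ 3) * (∑ j, s j * t j))
      + c Pc' * ((∑ j, s j * t j ^ 2) * (∑ j, s j * t j ^ 2))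
      + c Pd' * ((∑ j, s j * t j ^ 2) * ((∑ j, s j * t j) * (∑ j, s j * t j)))
      + c Pe * ((∑ j, s j * t j) * ((∑ j, s j * t j) * ((∑ j, s j * t j) * (∑ j, s j * t j)))) := by
  rw [phiForm, univ_eq]
  rw [Finset.sum_insert (by decide), Finset.sum_insert (by decide),
    Finset.sum_insert (by decide), Finset.sum_insert (by decide), Finset.sum_singleton]
  simp only [phiPart, Pa, Pb, Pc', Pd', Pe, Multiset.insert_eq_cons, Multiset.map_cons,
    Multiset.map_singleton, Multiset.prod_cons, Multiset.prod_singleton, pow_one]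
  ring

lemma eval_symForm (n : ℕ) {k : ℕ} (c : Nat.Partition k → ℝ) (x : Fin n → ℝ) :
    eval x (symForm n c) = phiForm n c (fun _ => (n : ℝ)⁻¹) x := by
  rw [symForm, phiForm, map_sum]
  refine Finset.sum_congr rfl fun lam _ => ?_
  rw [map_mul, eval_C]
  congr 1
  rw [pPart, phiPart, map_multiset_prod, Multiset.map_map]
  refine congrArg _ (Multiset.map_congr rfl fun i _ => ?_)
  simp only [Function.comp_apply, _root_.psum, map_mul, eval_C, map_sum, map_pow, eval_X,
    Finset.mul_sum]

section expand
variable {d : ℕ} (s t : Fin d → ℝ)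

lemma e1 (m : ℝ) : ∑ j, s j * (t j - m) = (∑ j, s j * t j) - m * (∑ j, s j) := by
  simp only [Finset.mul_sum, ← Finset.sum_sub_distrib]
  exact Finset.sum_congr rfl fun j _ => by ring

lemma e2 (m : ℝ) : ∑ j, s j * (t j - m)^2 =
    (∑ j, s j * t j^2) - 2*m*(∑ j, s j * t j) + m^2*(∑ j, s j) := by
  simp only [Finset.mul_sum, ← Finset.sum_sub_distrib, ← Finset.sum_add_distrib]
  exact Finset.sum_congr rfl fun j _ => by ring

lemma e3 (m : ℝ) : ∑ j, s j * (t j - m)^3 =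
    (∑ j, s j * t j^3) - 3*m*(∑ j, s j * t j^2) + 3*m^2*(∑ j, s j * t j)
      - m^3*(∑ j, s j) := by
  simp only [Finset.mul_sum, ← Finset.sum_sub_distrib, ← Finset.sum_add_distrib]
  exact Finset.sum_congr rfl fun j _ => by ring

lemma e4 (m : ℝ) : ∑ j, s j * (t j - m)^4 =
    (∑ j, s j * t j^4) - 4*m*(∑ j, s j * t j^3) + 6*m^2*(∑ j, s j * t j^2)
      - 4*m^3*(∑ j, s j * t j) + m^4*(∑ j, s j) := by
  simp only [Finset.mul_sum, ← Finset.sum_sub_distrib, ← Finset.sum_add_distrib]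
  exact Finset.sum_congr rfl fun j _ => by ring

lemma eE (m u lam : ℝ) : ∑ j, s j * ((t j - m)^2 - u - lam*(t j - m))^2 =
    (∑ j, s j * (t j - m)^4) - 2*lam*(∑ j, s j * (t j - m)^3)
      + (lam^2 - 2*u)*(∑ j, s j * (t j - m)^2) + 2*lam*u*(∑ j, s j * (t j - m))
      + u^2*(∑ j, s j) := by
  simp only [Finset.mul_sum, ← Finset.sum_sub_distrib, ← Finset.sum_add_distrib]
  exact Finset.sum_congr rfl fun j _ => by ring

end expand

/-- Central decomposition of `phiForm` into mean and centered moments. -/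
lemma central (d : ℕ) (c : Nat.Partition 4 → ℝ) (s t : Fin d → ℝ)
    (h1 : ∑ j, s j = 1) :
    phiForm d c s t =
      (c Pa + c Pb + c Pc' + c Pd' + c Pe) * (∑ j, s j * t j)^4
      + (6*c Pa + 3*c Pb + 2*c Pc' + c Pd') * (∑ j, s j * t j)^2
          * (∑ j, s j * (t j - ∑ i, s i * t i)^2)
      + (4*c Pa + c Pb) * (∑ j, s j * t j) * (∑ j, s j * (t j - ∑ i, s i * t i)^3)
      + c Pc' * (∑ j, s j * (t j - ∑ i, s i * t i)^2)^2
      + c Pa * (∑ j, s j * (t j - ∑ i, s i * t i)^4) := by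
  rw [phiForm_eq, e2, e3, e4, h1]
  ring

lemma hankel {d : ℕ} (s t : Fin d → ℝ) (hs : ∀ j, 0 ≤ s j) (h1 : ∑ j, s j = 1)
    (hq2 : 0 < ∑ j, s j * (t j - ∑ i, s i * t i)^2) :
    (∑ j, s j * (t j - ∑ i, s i * t i)^3)^2 + (∑ j, s j * (t j - ∑ i, s i * t i)^2)^3
      ≤ (∑ j, s j * (t j - ∑ i, s i * t i)^2) * (∑ j, s j * (t j - ∑ i, s i * t i)^4) := by
  set m := ∑ i, s i * t i with hm
  set q2 := ∑ j, s j * (t j - m)^2 with hq2d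
  set q3 := ∑ j, s j * (t j - m)^3 with hq3d
  set q4 := ∑ j, s j * (t j - m)^4 with hq4d
  have hq1 : ∑ j, s j * (t j - m) = 0 := by rw [e1, h1, hm]; ring
  have key : (0:ℝ) ≤ ∑ j, s j * ((t j - m)^2 - q2 - (q3/q2)*(t j - m))^2 :=
    Finset.sum_nonneg fun j _ => mul_nonneg (hs j) (sq_nonneg _)
  rw [eE s t m q2 (q3/q2)] at key
  rw [← hq2d, ← hq3d, ← hq4d, hq1, h1] at key
  have hne : q2 ≠ 0 := ne_of_gt hq2
  have key2 : (0:ℝ) ≤ q2 * (q4 - 2*(q3/q2)*q3 + ((q3/q2)^2 - 2*q2)*q2 + 2*(q3/q2)*q2*0 + q2^2*1) :=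
    mul_nonneg hq2.le key
  have e : q2 * (q4 - 2*(q3/q2)*q3 + ((q3/q2)^2 - 2*q2)*q2 + 2*(q3/q2)*q2*0 + q2^2*1)
      = q2*q4 - q3^2 - q2^3 := by field_simp; ring
  rw [e] at key2
  linarith

lemma qzero {d : ℕ} (s t : Fin d → ℝ) (hs : ∀ j, 0 ≤ s j) (m : ℝ)
    (hq2 : ∑ j, s j * (t j - m)^2 = 0) :
    (∑ j, s j * (t j - m)^3) = 0 ∧ (∑ j, s j * (t j - m)^4) = 0 := by
  have each := (Finset.sum_eq_zero_iff_of_nonneg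
    (fun j _ => mul_nonneg (hs j) (sq_nonneg (t j - m)))).mp hq2
  constructor <;>
  · refine Finset.sum_eq_zero fun j hj => ?_
    rcases mul_eq_zero.mp (each j hj) with h | h
    · rw [h, zero_mul]
    · have ht : t j - m = 0 := sq_eq_zero_iff.mp h
      rw [ht]; ring

lemma realize (u w : ℝ) (hu : 0 < u) :
    ∃ α τ : ℝ, 0 ≤ α ∧ α ≤ 1 ∧
      α*(1-α)*τ^2 = u ∧ α*(1-α)*(1-2*α)*τ^3 = w ∧
      (α*(1-α)*((1-α)^2 - α*(1-α) + α^2)*τ^4) * u = u^3 + w^2 := by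
  have hune : u ≠ 0 := ne_of_gt hu
  set su := Real.sqrt u with hsud
  have hsu : su^2 = u := Real.sq_sqrt hu.le
  have hsupos : 0 < su := Real.sqrt_pos.mpr hu
  set δ := w / (u * su) with hδd
  have hδ : δ * (u * su) = w := by
    rw [hδd]; field_simp
  have hE : (0:ℝ) < 4 + δ^2 := by positivity
  have hEne : (4:ℝ) + δ^2 ≠ 0 := ne_of_gt hE
  set sE := Real.sqrt (4 + δ^2) with hsEd
  have hsE : sE^2 = 4 + δ^2 := Real.sq_sqrt hE.le
  have hsEpos : 0 < sE := Real.sqrt_pos.mpr hE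
  have hsEne : sE ≠ 0 := ne_of_gt hsEpos
  refine ⟨(1 - δ/sE)/2, su*sE, ?_, ?_, ?_, ?_, ?_⟩
  · have h1 : δ ≤ sE := by nlinarith [hsE, hsEpos, sq_nonneg (δ - sE)]
    have h2 : δ/sE ≤ 1 := (div_le_one hsEpos).mpr h1
    linarith
  · have h1 : -sE ≤ δ := by nlinarith [hsE, hsEpos, sq_nonneg (δ + sE)]
    have h2 : -1 ≤ δ/sE := by rw [neg_le, ← neg_div]; exact (div_le_one hsEpos).mpr (by linarith)
    linarith
  · have hγ2 : (δ/sE)^2 = δ^2/(4+δ^2) := by rw [div_pow, hsE]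
    have heq : (1 - δ/sE)/2*(1-(1 - δ/sE)/2)*(su*sE)^2
        = (1 - (δ/sE)^2)/4 * (su^2*sE^2) := by ring
    rw [heq, hγ2, hsu, hsE]
    field_simp
    ring
  · have heq : (1 - δ/sE)/2*(1-(1 - δ/sE)/2)*(1-2*((1 - δ/sE)/2))*(su*sE)^3
        = (1 - (δ/sE)^2)/4 * (δ/sE) * (su^3*sE^3) := by ring
    have hsu3 : su^3 = u * su := by rw [pow_succ, hsu]
    have hsE3 : sE^3 = (4 + δ^2) * sE := by rw [pow_succ, hsE]
    rw [heq, div_pow, hsE, hsu3, hsE3, ← hδ]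
    field_simp
    ring
  · have hw2 : w^2 = δ^2*u^2*u := by
      have h' : w^2 = δ^2*u^2*su^2 := by rw [← hδ]; ring
      rw [h', hsu]
    have heq : (1 - δ/sE)/2*(1-(1 - δ/sE)/2)
          *((1-(1 - δ/sE)/2)^2 - (1 - δ/sE)/2*(1-(1 - δ/sE)/2) + ((1 - δ/sE)/2)^2)
          *(su*sE)^4 * u
        = (1 - (δ/sE)^2)/4 * ((1 + 3*(δ/sE)^2)/4) * ((su^2)^2*(sE^2)^2) * u := by ring
    rw [heq, div_pow, hsE, hsu, hw2]
    field_simp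
    ring

lemma theta_nonneg (c : Nat.Partition 4 → ℝ)
    (hR : ∀ α : ℝ, 0 ≤ α → α ≤ 1 → ∀ x y : ℝ, 0 ≤ phiForm 2 c ![α, 1 - α] ![x, y])
    (m u w : ℝ) (hu : 0 < u) :
    0 ≤ (c Pa + c Pb + c Pc' + c Pd' + c Pe)*m^4*u
      + (6*c Pa + 3*c Pb + 2*c Pc' + c Pd')*m^2*u^2
      + (4*c Pa + c Pb)*m*u*w + (c Pc' + c Pa)*u^3 + c Pa*w^2 := by
  obtain ⟨α, τ, hα0, hα1, hb2, hb3, hb4⟩ := realize u w hu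
  have hsum : ∑ j : Fin 2, (![α, 1-α]) j = 1 := by
    rw [Fin.sum_univ_two]
    simp only [Matrix.cons_val_zero, Matrix.cons_val_one, Matrix.head_cons]
    ring
  have h0 := hR α hα0 hα1 (m + (1-α)*τ) (m - α*τ)
  rw [central 2 c ![α, 1-α] ![m + (1-α)*τ, m - α*τ] hsum] at h0
  have hmean : (∑ j : Fin 2, (![α, 1-α]) j * (![m + (1-α)*τ, m - α*τ]) j) = m := by
    rw [Fin.sum_univ_two]
    simp only [Matrix.cons_val_zero, Matrix.cons_val_one, Matrix.head_cons]
    ring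
  rw [hmean] at h0
  have hm2 : (∑ j : Fin 2, (![α, 1-α]) j * ((![m + (1-α)*τ, m - α*τ]) j - m)^2) = u := by
    rw [Fin.sum_univ_two]
    simp only [Matrix.cons_val_zero, Matrix.cons_val_one, Matrix.head_cons]
    linear_combination hb2
  have hm3 : (∑ j : Fin 2, (![α, 1-α]) j * ((![m + (1-α)*τ, m - α*τ]) j - m)^3) = w := by
    rw [Fin.sum_univ_two]
    simp only [Matrix.cons_val_zero, Matrix.cons_val_one, Matrix.head_cons]
    linear_combination hb3
  have hm4 : (∑ j : Fin 2, (![α, 1-α]) j * ((![m + (1-α)*τ, m - α*τ]) j - m)^4)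
      = α*(1-α)*((1-α)^2 - α*(1-α) + α^2)*τ^4 := by
    rw [Fin.sum_univ_two]
    simp only [Matrix.cons_val_zero, Matrix.cons_val_one, Matrix.head_cons]
    ring
  rw [hm2, hm3, hm4] at h0
  set Q := α*(1-α)*((1-α)^2 - α*(1-α) + α^2)*τ^4 with hQ
  have h5 := mul_nonneg hu.le h0
  have hz : Q*u - (u^3 + w^2) = 0 := sub_eq_zero_of_eq hb4
  have key : (c Pa + c Pb + c Pc' + c Pd' + c Pe)*m^4*u
      + (6*c Pa + 3*c Pb + 2*c Pc' + c Pd')*m^2*u^2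
      + (4*c Pa + c Pb)*m*u*w + (c Pc' + c Pa)*u^3 + c Pa*w^2
      = u * ((c Pa + c Pb + c Pc' + c Pd' + c Pe) * m^4
        + (6*c Pa + 3*c Pb + 2*c Pc' + c Pd') * m^2 * u
        + (4*c Pa + c Pb) * m * w + c Pc' * u^2 + c Pa * Q)
        - c Pa * (Q*u - (u^3 + w^2)) := by ring
  rw [key, hz, mul_zero, sub_zero]
  exact h5

lemma condA (c : Nat.Partition 4 → ℝ)
    (hR : ∀ α : ℝ, 0 ≤ α → α ≤ 1 → ∀ x y : ℝ, 0 ≤ phiForm 2 c ![α, 1 - α] ![x, y]) :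
    0 ≤ c Pa + c Pb + c Pc' + c Pd' + c Pe := by
  have h := hR 1 zero_le_one le_rfl 1 1
  rw [phiForm_eq] at h
  simp only [Fin.sum_univ_two, Matrix.cons_val_zero, Matrix.cons_val_one, Matrix.head_cons,
    one_pow, mul_one] at h
  nlinarith [h]

lemma aux_c4 (cA cC : ℝ)
    (h : ∀ α : ℝ, 0 < α → α ≤ 1/2 →
      0 ≤ cC*(α*(1-α))^2 + cA*((α*(1-α))*(1-3*(α*(1-α))))) :
    0 ≤ cA := by
  by_contra hneg
  push_neg at hneg
  obtain ⟨α, hα0, hαhalf, hαle⟩ :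
      ∃ α : ℝ, 0 < α ∧ α ≤ 1/2 ∧ α ≤ -cA/(2*(|cC - 3*cA| + 1)) :=
    ⟨min (1/2) (-cA/(2*(|cC - 3*cA| + 1))),
      lt_min (by norm_num) (div_pos (by linarith) (by positivity)),
      min_le_left _ _, min_le_right _ _⟩
  have hβpos : 0 < α*(1-α) := mul_pos hα0 (by linarith)
  have h0 := h α hα0 hαhalf
  have step1 : 0 ≤ cA + (α*(1-α))*(cC - 3*cA) := by nlinarith [h0, hβpos]
  have hβle : α*(1-α) ≤ α := by nlinarith
  have hle1 : cC - 3*cA ≤ |cC - 3*cA| + 1 := by linarith [le_abs_self (cC - 3*cA)]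
  have hβM : (α*(1-α))*(cC - 3*cA) ≤ (α*(1-α))*(|cC - 3*cA|+1) :=
    mul_le_mul_of_nonneg_left hle1 hβpos.le
  have hβM2 : (α*(1-α))*(|cC - 3*cA|+1) ≤ α*(|cC - 3*cA|+1) :=
    mul_le_mul_of_nonneg_right hβle (by positivity)
  have hαM : α*(|cC - 3*cA|+1) ≤ -cA/2 := by
    have h5 := mul_le_mul_of_nonneg_right hαle
      (show (0:ℝ) ≤ |cC - 3*cA|+1 by positivity)
    have he : (-cA/(2*(|cC - 3*cA|+1)))*(|cC - 3*cA|+1) = -cA/2 := by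
      field_simp <;> ring
    linarith [h5, he.le, he.ge]
  linarith [step1, hβM, hβM2, hαM, hneg]

lemma condc4 (c : Nat.Partition 4 → ℝ)
    (hR : ∀ α : ℝ, 0 ≤ α → α ≤ 1 → ∀ x y : ℝ, 0 ≤ phiForm 2 c ![α, 1 - α] ![x, y]) :
    0 ≤ c Pa := by
  apply aux_c4 (c Pa) (c Pc')
  intro α hα0 hαhalf
  have hα1 : α ≤ 1 := by linarith
  have hsum : ∑ j : Fin 2, (![α, 1-α]) j = 1 := by
    rw [Fin.sum_univ_two]
    simp only [Matrix.cons_val_zero, Matrix.cons_val_one, Matrix.head_cons]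
    ring
  have h0 := hR α hα0.le hα1 (1-α) (-α)
  rw [central 2 c ![α, 1-α] ![1-α, -α] hsum] at h0
  have hmean : (∑ j : Fin 2, (![α, 1-α]) j * (![1-α, -α]) j) = 0 := by
    rw [Fin.sum_univ_two]
    simp only [Matrix.cons_val_zero, Matrix.cons_val_one, Matrix.head_cons]
    ring
  rw [hmean] at h0
  have hm2 : (∑ j : Fin 2, (![α, 1-α]) j * ((![1-α, -α]) j - 0)^2) = α*(1-α) := by
    rw [Fin.sum_univ_two]
    simp only [Matrix.cons_val_zero, Matrix.cons_val_one, Matrix.head_cons]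
    ring
  have hm4 : (∑ j : Fin 2, (![α, 1-α]) j * ((![1-α, -α]) j - 0)^4)
      = (α*(1-α))*(1-3*(α*(1-α))) := by
    rw [Fin.sum_univ_two]
    simp only [Matrix.cons_val_zero, Matrix.cons_val_one, Matrix.head_cons]
    ring
  rw [hm2, hm4] at h0
  linarith [h0]

lemma sum_ite_pow (n k : ℕ) (hkn : k ≤ n) (hn : 0 < n) (x y : ℝ) (i : ℕ) :
    ∑ j : Fin n, (n:ℝ)⁻¹ * (if (j:ℕ) < k then x else y)^i
      = (k:ℝ)/n * x^i + (1 - (k:ℝ)/n) * y^i := by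
  have hnR : (0:ℝ) < n := by exact_mod_cast hn
  rw [← Finset.mul_sum]
  have hsum : ∑ j : Fin n, (if (j:ℕ) < k then x else y)^i = k*x^i + ((n:ℝ)-k)*y^i := by
    rw [Fin.sum_univ_eq_sum_range (fun j => (if j < k then x else y)^i) n]
    rw [Finset.range_eq_Ico, ← Finset.sum_Ico_consecutive _ (Nat.zero_le k) hkn]
    have h1 : ∑ j ∈ Finset.Ico 0 k, (if j < k then x else y)^i = (k:ℝ)*x^i := by
      rw [Finset.sum_congr rfl (fun j hj => by rw [if_pos (Finset.mem_Ico.mp hj).2])]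
      rw [Finset.sum_const, Nat.card_Ico, Nat.sub_zero, nsmul_eq_mul]
    have h2 : ∑ j ∈ Finset.Ico k n, (if j < k then x else y)^i = ((n:ℝ)-k)*y^i := by
      rw [Finset.sum_congr rfl (fun j hj => by
        rw [if_neg (not_lt.mpr (Finset.mem_Ico.mp hj).1)])]
      rw [Finset.sum_const, Nat.card_Ico, nsmul_eq_mul, Nat.cast_sub hkn]
    rw [h1, h2]
  rw [hsum]
  field_simp

lemma phiForm_two_eq (c : Nat.Partition 4 → ℝ) (n k : ℕ) (hkn : k ≤ n) (hn : 0 < n)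
    (x y : ℝ) :
    phiForm n c (fun _ => (n:ℝ)⁻¹) (fun j => if (j:ℕ) < k then x else y)
      = phiForm 2 c ![(k:ℝ)/n, 1-(k:ℝ)/n] ![x, y] := by
  rw [phiForm_eq, phiForm_eq]
  have h4 := sum_ite_pow n k hkn hn x y 4
  have h3 := sum_ite_pow n k hkn hn x y 3
  have h2 := sum_ite_pow n k hkn hn x y 2
  have h1 := sum_ite_pow n k hkn hn x y 1
  simp only [pow_one] at h1
  rw [h4, h3, h2, h1]
  rw [Fin.sum_univ_two, Fin.sum_univ_two, Fin.sum_univ_two, Fin.sum_univ_two]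
  simp only [Matrix.cons_val_zero, Matrix.cons_val_one, Matrix.head_cons]

end MemP4Aux

open MemP4Aux in
/-- A symmetric quartic `f^{(n)} = Σ_{λ⊢4} c_λ p_λ^{(n)}` is nonnegative on
`ℝ^n` for every `n ≥ 4` iff for every `α ∈ [0,1]` the bivariate quartic form
`Φ_c^α(x,y) = Σ_{λ⊢4} c_λ Φ_λ(α, 1−α, x, y)` is nonnegative on `ℝ²`. -/
theorem mem_P4_iff_bivariate (c : Nat.Partition 4 → ℝ) :
    (∀ n : ℕ, 4 ≤ n → ∀ x : Fin n → ℝ, 0 ≤ eval x (symForm n c)) ↔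
    (∀ α : ℝ, 0 ≤ α → α ≤ 1 → ∀ x y : ℝ,
      0 ≤ phiForm 2 c ![α, 1 - α] ![x, y]) := by
  constructor
  · -- forward: density of rationals k/n
    intro hL α hα0 hα1 x y
    by_contra hneg
    push_neg at hneg
    set G : ℝ → ℝ := fun a => phiForm 2 c ![a, 1 - a] ![x, y] with hG
    have hGα : G α < 0 := hneg
    have hGexp : G = fun a =>
        c Pa * (a*x^4+(1-a)*y^4)
        + c Pb * ((a*x^3+(1-a)*y^3) * (a*x+(1-a)*y))
        + c Pc' * ((a*x^2+(1-a)*y^2) * (a*x^2+(1-a)*y^2))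
        + c Pd' * ((a*x^2+(1-a)*y^2) * ((a*x+(1-a)*y) * (a*x+(1-a)*y)))
        + c Pe * ((a*x+(1-a)*y) * ((a*x+(1-a)*y) * ((a*x+(1-a)*y) * (a*x+(1-a)*y)))) := by
      funext a
      simp only [hG]
      rw [phiForm_eq]
      rw [Fin.sum_univ_two, Fin.sum_univ_two, Fin.sum_univ_two, Fin.sum_univ_two]
      simp only [Matrix.cons_val_zero, Matrix.cons_val_one, Matrix.head_cons]
    have hcont : Continuous G := by
      rw [hGexp]; fun_prop
    obtain ⟨δ, hδpos, hδ⟩ := Metric.continuous_iff.mp hcont α (-(G α)) (by linarith)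
    obtain ⟨n₀, hn₀⟩ := exists_nat_gt (1/δ)
    set n := n₀ + 4 with hn
    have hn4 : 4 ≤ n := by omega
    have hnpos : (0:ℝ) < n := by positivity
    have hinv : 1/(n:ℝ) < δ := by
      have h1 : (1:ℝ)/δ < n := by
        calc (1:ℝ)/δ < n₀ := hn₀
        _ ≤ n := by exact_mod_cast Nat.le_add_right n₀ 4
      rw [div_lt_iff₀ hnpos]
      rw [div_lt_iff₀ hδpos] at h1
      linarith [h1]
    set k := ⌊α*n⌋₊ with hk
    have hfl : (k:ℝ) ≤ α*n := Nat.floor_le (by positivity)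
    have hfu : α*(n:ℝ) < k + 1 := Nat.lt_floor_add_one _
    have hkn : k ≤ n := by
      have : (k:ℝ) ≤ n := le_trans hfl (by nlinarith)
      exact_mod_cast this
    have hdist : dist ((k:ℝ)/n) α < δ := by
      rw [Real.dist_eq, abs_lt]
      have e1 : (k:ℝ)/n ≤ α := (div_le_iff₀ hnpos).mpr (by linarith)
      have e2 : α < ((k:ℝ)+1)/n := (lt_div_iff₀ hnpos).mpr (by linarith)
      have e3 : ((k:ℝ)+1)/n = k/n + 1/n := by ring
      constructor <;> [skip; skip] <;> nlinarith [e1, e2, e3.le, e3.ge, hinv, hδpos]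
    have hg := hδ ((k:ℝ)/n) hdist
    rw [Real.dist_eq] at hg
    have habs := abs_lt.mp hg
    have hGk : G ((k:ℝ)/n) < 0 := by linarith [habs.2]
    have hev := hL n hn4 (fun j => if (j:ℕ) < k then x else y)
    rw [eval_symForm, phiForm_two_eq c n k hkn (by omega) x y] at hev
    rw [hG] at hGk
    simp only at hGk
    linarith [hev, hGk]
  · -- reverse
    intro hR n hn x
    have hnpos : (0:ℝ) < n := by
      have : (4:ℝ) ≤ n := by exact_mod_cast hn
      linarith
    set s : Fin n → ℝ := fun _ => (n:ℝ)⁻¹ with hs_def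
    have hs : ∀ j, 0 ≤ s j := fun j => by rw [hs_def]; positivity
    have hsum : ∑ j, s j = 1 := by
      rw [hs_def, Finset.sum_const, Finset.card_univ, Fintype.card_fin, nsmul_eq_mul]
      field_simp
    rw [eval_symForm, central n c s x hsum]
    set m := ∑ i, s i * x i with hm
    set q2 := ∑ j, s j * (x j - m)^2 with hq2d
    set q3 := ∑ j, s j * (x j - m)^3 with hq3d
    set q4 := ∑ j, s j * (x j - m)^4 with hq4d
    have hq2 : 0 ≤ q2 := Finset.sum_nonneg fun j _ => mul_nonneg (hs j) (sq_nonneg _)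
    rcases hq2.eq_or_lt with h | h
    · -- q2 = 0
      have h0 : (∑ j, s j * (x j - m)^2) = 0 := by rw [← hq2d]; exact h.symm
      obtain ⟨h3, h4⟩ := qzero s x hs m h0
      rw [← hq3d] at h3
      rw [← hq4d] at h4
      rw [← h, h3, h4]
      have hA := condA c hR
      have : 0 ≤ (c Pa + c Pb + c Pc' + c Pd' + c Pe) * m^4 :=
        mul_nonneg hA (by positivity)
      nlinarith [this]
    · -- q2 > 0
      have hH := hankel s x hs hsum (by rw [← hm, ← hq2d] at *; exact h)
      rw [← hm, ← hq2d, ← hq3d, ← hq4d] at hH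
      have hΘ := theta_nonneg c hR m q2 q3 h
      have hc4 := condc4 c hR
      have h1 : 0 ≤ c Pa * ((q2*q4) - (q3^2 + q2^3)) :=
        mul_nonneg hc4 (by linarith [hH])
      have key : q2 * ((c Pa + c Pb + c Pc' + c Pd' + c Pe) * m^4
          + (6*c Pa + 3*c Pb + 2*c Pc' + c Pd') * m^2 * q2
          + (4*c Pa + c Pb) * m * q3 + c Pc' * q2^2 + c Pa * q4)
          = ((c Pa + c Pb + c Pc' + c Pd' + c Pe)*m^4*q2
            + (6*c Pa + 3*c Pb + 2*c Pc' + c Pd')*m^2*q2^2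
            + (4*c Pa + c Pb)*m*q2*q3 + (c Pc' + c Pa)*q2^3 + c Pa*q3^2)
            + c Pa * ((q2*q4) - (q3^2 + q2^3)) := by ring
      have h2 : 0 ≤ q2 * ((c Pa + c Pb + c Pc' + c Pd' + c Pe) * m^4
          + (6*c Pa + 3*c Pb + 2*c Pc' + c Pd') * m^2 * q2
          + (4*c Pa + c Pb) * m * q3 + c Pc' * q2^2 + c Pa * q4) := by
        rw [key]
        have hΘ' : 0 ≤ (c Pa + c Pb + c Pc' + c Pd' + c Pe)*m^4*q2
            + (6*c Pa + 3*c Pb + 2*c Pc' + c Pd')*m^2*q2^2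
            + (4*c Pa + c Pb)*m*q2*q3 + (c Pc' + c Pa)*q2^3 + c Pa*q3^2 := by
          have := theta_nonneg c hR m q2 q3 h
          nlinarith [this]
        linarith [hΘ', h1]
      have := (mul_le_mul_iff_right₀ h).mp (by linarith [h2] :
        q2 * 0 ≤ q2 * ((c Pa + c Pb + c Pc' + c Pd' + c Pe) * m^4
          + (6*c Pa + 3*c Pb + 2*c Pc' + c Pd') * m^2 * q2
          + (4*c Pa + c Pb) * m * q3 + c Pc' * q2^2 + c Pa * q4))
      linarith [this]
end
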